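/- For k ≥ 3, let T_{2^k} be the complete balanced binary tree with 2^k leaves, and let b_5(k) and g_5(k) be the numbers of 5-element leaf subsets of T_{2^k} whose restriction tree has shape Bal_5 and Gir_5, respectively. Then b_5(k) = (1/315)·2^{k−2}·(2^k−4)·(2^k−2)·(2^k−1)·(7·2^k−11) and g_5(k) = (1/105)·2^{k−3}·(2^k−4)·(2^k−3)·(2^k−2)·(2^k−1); consequently the induced subtree densities satisfy b_5(k)/C(2^k,5) = 2/3 + 20/(21·(2^k−3)) and g_5(k)/C(2^k,5) = 1/7, so as k → ∞ the density vector (p_1, p_2, p_3) for (Comb_5, Gir_5, Bal_5) converges to (4/21, 1/7, 2/3). -/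

import Mathlib

/-! ## Rooted binary trees, shapes, restriction, distributions -/

/-- Rooted binary trees with leaves labelled by `α`:
a tree is either a single (labelled) leaf, or an (ordered) pair of subtrees. -/
inductive RBT (α : Type) : Type
  | leaf (a : α) : RBT α
  | node (l r : RBT α) : RBT α
  deriving DecidableEq

namespace RBT

variable {α β : Type}

/-- The multiset of leaf labels of a tree. -/
def leaves : RBT α → Multiset α
  | leaf a => {a}
  | node l r => leaves l + leaves r

/-- The number of leaves of a tree. -/
def numLeaves : RBT α → ℕ
  | leaf _ => 1
  | node l r => numLeaves l + numLeaves r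

/-- Relabel the leaves of a tree. -/
def map (f : α → β) : RBT α → RBT β
  | leaf a => leaf (f a)
  | node l r => node (map f l) (map f r)

end RBT

/-- Unlabelled rooted binary trees. -/
abbrev UTree : Type := RBT Unit

namespace RBT

variable {α : Type}

/-- Forget the leaf labels of a tree. -/
def forget (t : RBT α) : UTree := t.map fun _ => ()

/-- Structural comparison on unlabelled trees (a leaf is smaller than an internal
node; internal nodes are compared lexicographically on their children). -/
def cmpT : UTree → UTree → Ordering
  | leaf _, leaf _ => .eq
  | leaf _, node _ _ => .lt
  | node _ _, leaf _ => .gt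
  | node a b, node c d => (cmpT a c).then (cmpT b d)

/-- Canonical form (AHU) of an unlabelled rooted binary tree: recursively put the
two children of every internal vertex in nondecreasing `cmpT` order.  Two rooted
binary trees are isomorphic (equal as *shapes*) iff their canonical forms are
equal, so canonical forms faithfully encode the set `RB_U` of tree shapes. -/
def canon : UTree → UTree
  | leaf a => leaf a
  | node l r =>
      let l' := canon l
      let r' := canon r
      if cmpT l' r' = Ordering.gt then node r' l' else node l' r'

/-- The shape (leaf-relabelling isomorphism class, encoded as a canonical form)
of a labelled tree. -/
def shape (t : RBT α) : UTree := canon (forget t)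

/-- Restriction `T|_A` of a tree to the leaves with labels in `A`: delete all
leaves outside `A` and suppress the resulting degree-two vertices (the result is
rooted at the most recent common ancestor of `A`); `none` if no leaf survives. -/
def restrict [DecidableEq α] (A : Finset α) : RBT α → Option (RBT α)
  | leaf a => if a ∈ A then some (leaf a) else none
  | node l r =>
      match restrict A l, restrict A r with
      | some l', some r' => some (node l' r')
      | some l', none => some l'
      | none, some r' => some r'
      | none, none => none

end RBT

/-- `T ∈ RB_L(n)`: the leaves of `T` are labelled bijectively by `[n] = {0, …, n-1}`. -/
def IsPhylo (n : ℕ) (T : RBT ℕ) : Prop := T.leaves = Multiset.range n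

instance (n : ℕ) (T : RBT ℕ) : Decidable (IsPhylo n T) :=
  inferInstanceAs (Decidable (T.leaves = Multiset.range n))

/-- `p` is a probability distribution on `RB_L(n)` (viewed as a vector with
coordinates indexed by labelled trees): nonnegative, supported on `RB_L(n)`,
with total mass one. -/
structure IsDist (n : ℕ) (p : RBT ℕ → ℝ) : Prop where
  nonneg : ∀ T, 0 ≤ p T
  supp : ∀ T, ¬ IsPhylo n T → p T = 0
  total : HasSum p 1

/-- `p` is exchangeable: relabelling the leaves by any permutation of `[n]`
does not change probabilities. -/
def Exchangeable (n : ℕ) (p : RBT ℕ → ℝ) : Prop :=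
  ∀ σ : Equiv.Perm ℕ, (∀ i, i < n → σ i < n) → ∀ T : RBT ℕ, p (T.map ⇑σ) = p T

/-- `EX_n`: the exchangeable probability distributions on `RB_L(n)`. -/
def EX (n : ℕ) : Set (RBT ℕ → ℝ) := {p | IsDist n p ∧ Exchangeable n p}

/-- `O(u)`: the labelled trees in `RB_L(n)` whose shape is (the shape of) `u`. -/
def orbitSet (n : ℕ) (u : UTree) : Set (RBT ℕ) :=
  {T | IsPhylo n T ∧ T.shape = RBT.canon u}

/-- `p_u`: the exchangeable distribution that is uniform on `O(u)` and zero
elsewhere. -/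
noncomputable def pShape (n : ℕ) (u : UTree) : RBT ℕ → ℝ := fun T =>
  if IsPhylo n T ∧ T.shape = RBT.canon u then ((orbitSet n u).ncard : ℝ)⁻¹ else 0

/-- Marginalization map `π_n` from distributions on `RB_L(m)` to distributions on
`RB_L(n)`: `π_n(p)(T) = Σ_{S ∈ RB_L(m), S|_{[n]} = T} p(S)`. -/
noncomputable def marg (m n : ℕ) (p : RBT ℕ → ℝ) : RBT ℕ → ℝ := fun T =>
  ∑' S : RBT ℕ, if IsPhylo m S ∧ RBT.restrict (Finset.range n) S = some T then p S else 0

/-- `EX_n^m = π_n(EX_m)`: the `m`-sampling consistent exchangeable distributions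
on `RB_L(n)`. -/
def EXP (n m : ℕ) : Set (RBT ℕ → ℝ) := marg m n '' EX m

/-- `EX_n^∞ = ⋂_{m ≥ n} EX_n^m`: the exchangeable and (infinitely) sampling
consistent distributions on `RB_L(n)`. -/
def EXinf (n : ℕ) : Set (RBT ℕ → ℝ) := ⋂ (m : ℕ) (_ : n ≤ m), EXP n m

/-- The shapes with `n` leaves (`RB_U(n)`), encoded as canonical forms. -/
def ShapeOn (n : ℕ) : Type := {u : UTree // RBT.canon u = u ∧ u.numLeaves = n}

/-! ## Particular shapes -/

/-- The comb (caterpillar) shape `Comb_k` with `k` leaves. -/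
def combU : ℕ → UTree
  | 0 => .leaf ()
  | 1 => .leaf ()
  | n + 2 => .node (.leaf ()) (combU (n + 1))

/-- `comb(t, k)`: the comb with `k` leaves in which one of the two deepest leaves
is replaced by the tree `t`. -/
def combWith (t : UTree) : ℕ → UTree
  | 0 => t
  | 1 => t
  | n + 2 => .node (.leaf ()) (combWith t (n + 1))

/-- The balanced shape `Bal_4` on four leaves (two cherries joined at the root). -/
def bal4U : UTree := .node (.node (.leaf ()) (.leaf ())) (.node (.leaf ()) (.leaf ()))

/-- The giraffe shape `Gir_5 = comb(Bal_4, 2)` on five leaves. -/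
def gir5U : UTree := combWith bal4U 2

/-- The balanced shape `Bal_5` on five leaves (a cherry and a three-leaf comb
joined at the root). -/
def bal5U : UTree := .node (.node (.leaf ()) (.leaf ())) (combU 3)

/-- `bicomb(a, b)`: the shape obtained by joining `Comb_a` and `Comb_b` at a new
root. -/
def bicombU (a b : ℕ) : UTree := .node (combU a) (combU b)

/-- The complete balanced binary tree with `2^k` leaves. -/
def fullBal : ℕ → UTree
  | 0 => .leaf ()
  | k + 1 => .node (fullBal k) (fullBal k)

/-- A shape is maximally balanced if at every internal vertex the numbers of
leaves of the two child subtrees differ by at most one. -/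
def IsMaxBalanced : UTree → Prop
  | .leaf _ => True
  | .node l r =>
      (l.numLeaves ≤ r.numLeaves + 1 ∧ r.numLeaves ≤ l.numLeaves + 1)
        ∧ IsMaxBalanced l ∧ IsMaxBalanced r

/-! ## Counting restriction subtrees -/

/-- Label the leaves of an unlabelled tree `0, 1, 2, …` from left to right
(auxiliary function threading the next fresh label). -/
def labelFrom : UTree → ℕ → RBT ℕ × ℕ
  | .leaf _, k => (.leaf k, k + 1)
  | .node l r, k =>
      let pl := labelFrom l k
      let pr := labelFrom r pl.2
      (.node pl.1 pr.1, pr.2)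

/-- A labelled representative of an unlabelled tree, with distinct leaf labels. -/
def label (u : UTree) : RBT ℕ := (labelFrom u 0).1

/-- The number of `k`-element subsets `A` of the leaves of (a labelled
representative of) `u` such that the restriction tree `u|_A` has shape `s`. -/
def countRestr (u : UTree) (s : UTree) (k : ℕ) : ℕ :=
  (((label u).leaves.toFinset.powersetCard k).filter
    (fun A => Option.map RBT.shape (RBT.restrict A (label u)) = some (RBT.canon s))).card

/-- `c_5(u)`: the number of `5`-element subsets of the leaves of `u` whose
restriction tree is the five-leaf comb. -/
def c5 (u : UTree) : ℕ := countRestr u (combU 5) 5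

/-! ## One-hole contexts (for subtree-swapping statements) -/

/-- One-hole contexts for unlabelled rooted binary trees: a position in a tree at
which a subtree may be substituted. -/
inductive Ctx : Type
  | hole : Ctx
  | nodeL (c : Ctx) (r : UTree) : Ctx
  | nodeR (l : UTree) (c : Ctx) : Ctx

/-- Fill the hole of a context with a tree. -/
def Ctx.fill : Ctx → UTree → UTree
  | .hole, t => t
  | .nodeL c r, t => .node (c.fill t) r
  | .nodeR l c, t => .node l (c.fill t)

/-! ## The multinomial model -/

/-- A multiset of edges of a tree shape, encoded as the shape with a
multiplicity attached to every vertex (each vertex stands for the edge directly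
above it; the root vertex stands for the root edge of the extended tree). -/
inductive MTree : Type
  | leaf (k : ℕ) : MTree
  | node (k : ℕ) (l r : MTree) : MTree
  deriving DecidableEq

namespace MTree

/-- The underlying tree shape of a multiplicity assignment. -/
def strip : MTree → UTree
  | leaf _ => .leaf ()
  | node _ l r => .node (strip l) (strip r)

/-- The total number of chosen edges (with multiplicity). -/
def total : MTree → ℕ
  | leaf k => k
  | node k l r => k + total l + total r

/-- The product of the factorials of the multiplicities (denominator of the
multinomial coefficient). -/
def factProd : MTree → ℕ
  | leaf k => k.factorial
  | node k l r => k.factorial * factProd l * factProd r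

/-- The product `Π_e t_e^{m_A(e)}` of edge-parameter powers, for the parameter
vector assigning `c` to every pendant edge and `0` to every other edge. -/
noncomputable def wProd (c : ℝ) : MTree → ℝ
  | leaf k => c ^ k
  | node k l r => (0 : ℝ) ^ k * wProd c l * wProd c r

/-- Join two optional trees at a new root. -/
def mergeO : Option UTree → Option UTree → Option UTree
  | some l, some r => some (.node l r)
  | some l, none => some l
  | none, some r => some r
  | none, none => none

/-- Attach `k` new leaves along the edge above an (optional) already-built tree. -/
def attach : ℕ → Option UTree → Option UTree
  | 0, s => s
  | k + 1, s =>
      match attach k s with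
      | none => some (.leaf ())
      | some t => some (.node (.leaf ()) t)

/-- `T_A`: attach one new leaf to an edge for each of its occurrences in the
multiset `A`, and restrict the resulting tree to the new leaves. -/
def build : MTree → Option UTree
  | leaf k => attach k none
  | node k l r => attach k (mergeO (build l) (build r))

end MTree

/-- The probability, under the multinomial model on the shape `T` (with edge
parameter `c` on every pendant edge and `0` on every other edge), that a random
multiset `A` of `n` edges yields a tree `T_A` of shape `s`:
`d(s) = Σ_{A, T_A = s} C(n; m_A) Π_e t_e^{m_A(e)}`. -/
noncomputable def multinomDist (T : UTree) (c : ℝ) (n : ℕ) (s : UTree) : ℝ :=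
  ∑' a : MTree,
    if a.strip = T ∧ a.total = n ∧ Option.map RBT.canon a.build = some (RBT.canon s) then
      ((n.factorial : ℝ) / (a.factProd : ℝ)) * MTree.wProd c a
    else 0

/-! ### Auxiliary development -/

namespace RBT

lemma one_le_numLeaves {α : Type} (t : RBT α) : 1 ≤ t.numLeaves := by
  induction t with
  | leaf a => simp [numLeaves]
  | node l r ihl ihr => simp only [numLeaves]; omega

lemma card_leaves {α : Type} (t : RBT α) : Multiset.card t.leaves = t.numLeaves := by
  induction t with
  | leaf a => simp [leaves, numLeaves]
  | node l r ihl ihr => simp [leaves, numLeaves, ihl, ihr]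

lemma forget_map {α β : Type} (f : α → β) (t : RBT α) : (t.map f).forget = t.forget := by
  induction t with
  | leaf a => rfl
  | node l r ihl ihr => simp [forget, map] at *; exact ⟨ihl, ihr⟩

lemma shape_map {α β : Type} (f : α → β) (t : RBT α) : (t.map f).shape = t.shape := by
  simp [shape, forget_map]

lemma map_map {α β γ : Type} (f : α → β) (g : β → γ) (t : RBT α) :
    (t.map f).map g = t.map (g ∘ f) := by
  induction t with
  | leaf a => rfl
  | node l r ihl ihr => simp [map, ihl, ihr]

end RBT

lemma labelFrom_snd (u : UTree) (c : ℕ) : (labelFrom u c).2 = c + u.numLeaves := by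
  induction u generalizing c with
  | leaf a => simp [labelFrom, RBT.numLeaves]
  | node l r ihl ihr => simp [labelFrom, RBT.numLeaves, ihl, ihr]; omega

lemma labelFrom_fst_shift (u : UTree) (c d : ℕ) :
    (labelFrom u (c + d)).1 = (labelFrom u d).1.map (· + c) := by
  induction u generalizing d with
  | leaf a => simp [labelFrom, RBT.map]; omega
  | node l r ihl ihr =>
    simp only [labelFrom, labelFrom_snd, RBT.map]
    rw [ihl d, show c + d + l.numLeaves = c + (d + l.numLeaves) by omega, ihr (d + l.numLeaves)]

lemma labelFrom_fst (u : UTree) (c : ℕ) :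
    (labelFrom u c).1 = (label u).map (· + c) := by
  have := labelFrom_fst_shift u c 0
  simpa [label] using this

lemma leaves_label (u : UTree) : (label u).leaves = Multiset.range u.numLeaves := by
  have key : ∀ (t : UTree) (c : ℕ),
      (labelFrom t c).1.leaves = (Multiset.range t.numLeaves).map (· + c) := by
    intro t
    induction t with
    | leaf a => intro c; simp [labelFrom, RBT.leaves, RBT.numLeaves]
    | node l r ihl ihr =>
      intro c
      simp only [labelFrom, RBT.leaves, RBT.numLeaves, ihl, ihr, labelFrom_snd]
      rw [Multiset.range_add, Multiset.map_add, Multiset.map_map]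
      congr 1
      apply Multiset.map_congr rfl
      intro x _; simp; omega
  have := key u 0
  simpa [label] using this

lemma numLeaves_fullBal (k : ℕ) : (fullBal k).numLeaves = 2 ^ k := by
  induction k with
  | zero => simp [fullBal, RBT.numLeaves]
  | succ n ih => simp [fullBal, RBT.numLeaves, ih]; ring

lemma label_fullBal_succ (k : ℕ) :
    label (fullBal (k + 1)) =
      .node (label (fullBal k)) ((label (fullBal k)).map (· + 2 ^ k)) := by
  show (labelFrom (.node (fullBal k) (fullBal k)) 0).1 = _
  simp only [labelFrom, labelFrom_snd, Nat.zero_add, numLeaves_fullBal]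
  rw [labelFrom_fst (fullBal k) (2 ^ k)]
  rfl
/-! ### Restriction lemmas -/

lemma restrict_congr {A B : Finset ℕ} (t : RBT ℕ)
    (h : ∀ a ∈ t.leaves, (a ∈ A ↔ a ∈ B)) : RBT.restrict A t = RBT.restrict B t := by
  induction t with
  | leaf a =>
    have : a ∈ A ↔ a ∈ B := h a (by simp [RBT.leaves])
    simp only [RBT.restrict]
    by_cases hA : a ∈ A
    · rw [if_pos hA, if_pos (this.mp hA)]
    · rw [if_neg hA, if_neg (fun hB => hA (this.mpr hB))]
  | node l r ihl ihr =>
    have hl := ihl (fun a ha => h a (by simp [RBT.leaves]; exact Or.inl ha))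
    have hr := ihr (fun a ha => h a (by simp [RBT.leaves]; exact Or.inr ha))
    simp only [RBT.restrict, hl, hr]

lemma restrict_leaves (t : RBT ℕ) (A : Finset ℕ) :
    (RBT.restrict A t).elim (0 : Multiset ℕ) RBT.leaves = t.leaves.filter (· ∈ A) := by
  induction t with
  | leaf a =>
    simp only [RBT.restrict, RBT.leaves]
    by_cases hA : a ∈ A
    · rw [if_pos hA]; simp [Multiset.filter_singleton, hA, RBT.leaves]
    · rw [if_neg hA]; simp [Multiset.filter_singleton, hA]
  | node l r ihl ihr =>
    simp only [RBT.restrict, RBT.leaves, Multiset.filter_add, ← ihl, ← ihr]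
    cases RBT.restrict A l <;> cases RBT.restrict A r <;> simp [RBT.leaves]

lemma restrict_map_shift (t : RBT ℕ) (A : Finset ℕ) (c : ℕ) :
    RBT.restrict A (t.map (· + c)) =
      Option.map (RBT.map (· + c)) (RBT.restrict ((A.filter (c ≤ ·)).image (· - c)) t) := by
  induction t with
  | leaf a =>
    simp only [RBT.map, RBT.restrict]
    have : a ∈ (A.filter (c ≤ ·)).image (· - c) ↔ a + c ∈ A := by
      simp only [Finset.mem_image, Finset.mem_filter]
      constructor
      · rintro ⟨x, ⟨hx, hcx⟩, rfl⟩
        have : x - c + c = x := by omega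
        rwa [this]
      · intro h; exact ⟨a + c, ⟨h, by omega⟩, by omega⟩
    by_cases hA : a + c ∈ A
    · rw [if_pos hA, if_pos (this.mpr hA)]; rfl
    · rw [if_neg hA, if_neg (fun hB => hA (this.mp hB))]; rfl
  | node l r ihl ihr =>
    simp only [RBT.map, RBT.restrict, ihl, ihr]
    cases RBT.restrict ((A.filter (c ≤ ·)).image (· - c)) l <;>
      cases RBT.restrict ((A.filter (c ≤ ·)).image (· - c)) r <;> rfl

lemma restrict_empty (t : RBT ℕ) : RBT.restrict (∅ : Finset ℕ) t = none := by
  induction t with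
  | leaf a => simp [RBT.restrict]
  | node l r ihl ihr => simp [RBT.restrict, ihl, ihr]

/-- Restriction to a nonempty subset of the (distinct) leaves. -/
lemma restrict_some {t : RBT ℕ} {B : Finset ℕ} (hnd : t.leaves.Nodup)
    (hsub : ∀ b ∈ B, b ∈ t.leaves) (hne : B.Nonempty) :
    ∃ t', RBT.restrict B t = some t' ∧ t'.numLeaves = B.card := by
  have hl := restrict_leaves t B
  have hfil : (t.leaves.filter (· ∈ B)).card = B.card := by
    have : t.leaves.filter (· ∈ B) = B.val := by
      rw [Multiset.Nodup.ext (Multiset.Nodup.filter _ hnd) B.nodup]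
      intro a
      simp only [Multiset.mem_filter]
      exact ⟨fun h => h.2, fun h => ⟨hsub a h, h⟩⟩
    rw [this]; rfl
  cases h : RBT.restrict B t with
  | none =>
    rw [h] at hl
    obtain ⟨b, hb⟩ := hne
    have : b ∈ t.leaves.filter (· ∈ B) := Multiset.mem_filter.mpr ⟨hsub b hb, hb⟩
    rw [← hl] at this; simp at this
  | some t' =>
    rw [h] at hl
    refine ⟨t', rfl, ?_⟩
    rw [← RBT.card_leaves, show t'.leaves = _ from hl, hfil]
/-! ### Shape classification for small trees -/

/-- Canonical merge of two canonical shapes. -/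
def cmergeU (a b : UTree) : UTree :=
  if RBT.cmpT a b = Ordering.gt then .node b a else .node a b

lemma shape_node (l r : RBT ℕ) :
    (RBT.node l r).shape = cmergeU l.shape r.shape := by
  simp only [RBT.shape, RBT.forget, RBT.map, RBT.canon, cmergeU]
  split_ifs with h <;> simp [h]

def cherryU : UTree := .node (.leaf ()) (.leaf ())

lemma shape_card_one {t : RBT ℕ} (h : t.numLeaves = 1) : t.shape = .leaf () := by
  cases t with
  | leaf a => rfl
  | node l r =>
    have h1 := RBT.one_le_numLeaves l
    have h2 := RBT.one_le_numLeaves r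
    simp [RBT.numLeaves] at h
    omega

lemma shape_card_two {t : RBT ℕ} (h : t.numLeaves = 2) : t.shape = cherryU := by
  cases t with
  | leaf a => simp [RBT.numLeaves] at h
  | node l r =>
    have h1 := RBT.one_le_numLeaves l
    have h2 := RBT.one_le_numLeaves r
    simp only [RBT.numLeaves] at h
    have hl : l.numLeaves = 1 := by omega
    have hr : r.numLeaves = 1 := by omega
    rw [shape_node, shape_card_one hl, shape_card_one hr]; rfl

lemma shape_card_three {t : RBT ℕ} (h : t.numLeaves = 3) : t.shape = RBT.canon (combU 3) := by
  cases t with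
  | leaf a => simp [RBT.numLeaves] at h
  | node l r =>
    have h1 := RBT.one_le_numLeaves l
    have h2 := RBT.one_le_numLeaves r
    simp only [RBT.numLeaves] at h
    rcases (show l.numLeaves = 1 ∧ r.numLeaves = 2 ∨ l.numLeaves = 2 ∧ r.numLeaves = 1 by omega)
      with ⟨hl, hr⟩ | ⟨hl, hr⟩
    · rw [shape_node, shape_card_one hl, shape_card_two hr]; rfl
    · rw [shape_node, shape_card_two hl, shape_card_one hr]; rfl

lemma shape_card_four {t : RBT ℕ} (h : t.numLeaves = 4) :
    t.shape = RBT.canon (combU 4) ∨ t.shape = bal4U := by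
  cases t with
  | leaf a => simp [RBT.numLeaves] at h
  | node l r =>
    have h1 := RBT.one_le_numLeaves l
    have h2 := RBT.one_le_numLeaves r
    simp only [RBT.numLeaves] at h
    rcases (show l.numLeaves = 1 ∧ r.numLeaves = 3 ∨ l.numLeaves = 2 ∧ r.numLeaves = 2
        ∨ l.numLeaves = 3 ∧ r.numLeaves = 1 by omega)
      with ⟨hl, hr⟩ | ⟨hl, hr⟩ | ⟨hl, hr⟩
    · left; rw [shape_node, shape_card_one hl, shape_card_three hr]; rfl
    · right; rw [shape_node, shape_card_two hl, shape_card_two hr]; rfl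
    · left; rw [shape_node, shape_card_three hl, shape_card_one hr]; rfl
/-! ### The splitting recurrence -/

/-- The (optional) shape of the restriction of the balanced tree to a leaf set. -/
def rsh (k : ℕ) (B : Finset ℕ) : Option UTree :=
  Option.map RBT.shape (RBT.restrict B (label (fullBal k)))

/-- How shapes of restrictions to the two halves merge. -/
def mergeShape : Option UTree → Option UTree → Option UTree
  | some a, some b => some (cmergeU a b)
  | some a, none => some a
  | none, some b => some b
  | none, none => none

lemma toFinset_leaves_label (k : ℕ) :
    (label (fullBal k)).leaves.toFinset = Finset.range (2 ^ k) := by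
  ext a
  simp [leaves_label, numLeaves_fullBal, Multiset.mem_toFinset, Multiset.mem_range]

lemma countRestr_eq (k : ℕ) (s : UTree) (n : ℕ) :
    countRestr (fullBal k) s n =
      (((Finset.range (2 ^ k)).powersetCard n).filter
        (fun A => rsh k A = some (RBT.canon s))).card := by
  unfold countRestr rsh
  rw [toFinset_leaves_label]

lemma rsh_succ (k : ℕ) (A : Finset ℕ) :
    rsh (k + 1) A = mergeShape (rsh k (A ∩ Finset.range (2 ^ k)))
      (rsh k ((A.filter (2 ^ k ≤ ·)).image (· - 2 ^ k))) := by
  unfold rsh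
  rw [label_fullBal_succ]
  have h1 : RBT.restrict A (label (fullBal k))
      = RBT.restrict (A ∩ Finset.range (2 ^ k)) (label (fullBal k)) := by
    apply restrict_congr
    intro a ha
    rw [leaves_label, numLeaves_fullBal] at ha
    have : a < 2 ^ k := by simpa [Multiset.mem_range] using ha
    simp only [Finset.mem_inter, Finset.mem_range]
    tauto
  show Option.map RBT.shape (RBT.restrict A (.node _ _)) = _
  simp only [RBT.restrict]
  rw [h1, restrict_map_shift]
  cases RBT.restrict (A ∩ Finset.range (2 ^ k)) (label (fullBal k)) with
  | none =>
    cases RBT.restrict ((A.filter (2 ^ k ≤ ·)).image (· - 2 ^ k)) (label (fullBal k)) with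
    | none => rfl
    | some r' => simp [mergeShape, RBT.shape_map]
  | some l' =>
    cases RBT.restrict ((A.filter (2 ^ k ≤ ·)).image (· - 2 ^ k)) (label (fullBal k)) with
    | none => rfl
    | some r' => simp [mergeShape, shape_node, RBT.shape_map]

lemma count_succ (k n : ℕ) (s : UTree) :
    countRestr (fullBal (k + 1)) s n =
      ∑ i ∈ Finset.range (n + 1),
        (((Finset.range (2 ^ k)).powersetCard i ×ˢ
            (Finset.range (2 ^ k)).powersetCard (n - i)).filter
          (fun p => mergeShape (rsh k p.1) (rsh k p.2) = some (RBT.canon s))).card := by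
  set N := 2 ^ k with hN
  rw [countRestr_eq]
  have h2N : 2 ^ (k + 1) = N + N := by rw [hN]; ring
  -- the set of pairs
  set D := (((Finset.range N).powerset ×ˢ (Finset.range N).powerset).filter
    (fun p : Finset ℕ × Finset ℕ => p.1.card + p.2.card = n ∧
      mergeShape (rsh k p.1) (rsh k p.2) = some (RBT.canon s))) with hD
  have step1 : (((Finset.range (2 ^ (k+1))).powersetCard n).filter
      (fun A => rsh (k+1) A = some (RBT.canon s))).card = D.card := by
    apply Finset.card_bij' (i := fun A _ => (A ∩ Finset.range N, (A.filter (N ≤ ·)).image (· - N)))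
      (j := fun p _ => p.1 ∪ p.2.image (· + N))
    · -- hi
      intro A hA
      simp only [Finset.mem_filter, Finset.mem_powersetCard] at hA
      obtain ⟨⟨hsub, hcard⟩, hsh⟩ := hA
      rw [hD, Finset.mem_filter, Finset.mem_product]
      refine ⟨⟨?_, ?_⟩, ?_, ?_⟩
      · rw [Finset.mem_powerset]; exact Finset.inter_subset_right
      · rw [Finset.mem_powerset]
        intro x hx
        simp only [Finset.mem_image, Finset.mem_filter] at hx
        obtain ⟨y, ⟨hyA, hNy⟩, rfl⟩ := hx
        have := hsub hyA
        rw [h2N] at this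
        simp only [Finset.mem_range] at this ⊢
        omega
      · -- cards add up
        have hinter : A ∩ Finset.range N = A.filter (· < N) := by
          ext x; simp [Finset.mem_inter, Finset.mem_filter, Finset.mem_range, and_comm]
        have hcardim : ((A.filter (N ≤ ·)).image (· - N)).card = (A.filter (N ≤ ·)).card := by
          apply Finset.card_image_of_injOn
          intro x hx y hy hxy
          simp only [Finset.coe_filter, Set.mem_setOf_eq] at hx hy
          dsimp only at hxy
          omega
        rw [hinter, hcardim, ← hcard]
        have := Finset.card_filter_add_card_filter_not (s := A) (p := (· < N))
        simp only [not_lt] at this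
        exact this
      · rw [← hsh, rsh_succ]
    · -- hj
      intro p hp
      rw [hD, Finset.mem_filter, Finset.mem_product] at hp
      obtain ⟨⟨hp1, hp2⟩, hcard, hsh⟩ := hp
      rw [Finset.mem_powerset] at hp1 hp2
      simp only [Finset.mem_filter, Finset.mem_powersetCard]
      have him1 : p.1 ∩ Finset.range N = p.1 :=
        Finset.inter_eq_left.mpr hp1
      have himge : ∀ x ∈ p.2.image (· + N), N ≤ x := by
        intro x hx
        simp only [Finset.mem_image] at hx
        obtain ⟨y, _, rfl⟩ := hx
        omega
      have hd : Disjoint p.1 (p.2.image (· + N)) := by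
        rw [Finset.disjoint_left]
        intro x hx hx'
        have := hp1 hx
        have := himge x hx'
        simp only [Finset.mem_range] at *
        omega
      have hui : (p.1 ∪ p.2.image (· + N)) ∩ Finset.range N = p.1 := by
        ext x
        simp only [Finset.mem_inter, Finset.mem_union, Finset.mem_range]
        constructor
        · rintro ⟨hx | hx, hxN⟩
          · exact hx
          · exact absurd hxN (by have := himge x hx; omega)
        · intro hx; exact ⟨Or.inl hx, by simpa using hp1 hx⟩
      have huf : ((p.1 ∪ p.2.image (· + N)).filter (N ≤ ·)).image (· - N) = p.2 := by
        ext x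
        simp only [Finset.mem_image, Finset.mem_filter, Finset.mem_union]
        constructor
        · rintro ⟨y, ⟨hy | hy, hNy⟩, rfl⟩
          · exact absurd hNy (by have h := Finset.mem_range.mp (hp1 hy); omega)
          · obtain ⟨z, hz, rfl⟩ := hy
            have hzz : z + N - N = z := by omega
            rwa [hzz]
        · intro hx
          exact ⟨x + N, ⟨Or.inr ⟨x, hx, rfl⟩, by omega⟩, by omega⟩
      refine ⟨⟨?_, ?_⟩, ?_⟩
      · intro x hx
        rw [h2N]
        simp only [Finset.mem_union] at hx
        rcases hx with hx | hx
        · have := hp1 hx; simp only [Finset.mem_range] at *; omega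
        · simp only [Finset.mem_image] at hx
          obtain ⟨y, hy, rfl⟩ := hx
          have := hp2 hy; simp only [Finset.mem_range] at *; omega
      · rw [Finset.card_union_of_disjoint hd, Finset.card_image_of_injOn
          (fun x _ y _ h => by omega)]
        exact hcard
      · rw [rsh_succ, hui, huf]
        exact hsh
    · -- left inverse
      intro A hA
      simp only [Finset.mem_filter, Finset.mem_powersetCard] at hA
      ext x
      simp only [Finset.mem_union, Finset.mem_inter, Finset.mem_range, Finset.mem_image,
        Finset.mem_filter]
      constructor
      · rintro (⟨hx, _⟩ | ⟨y, ⟨z, ⟨hz, hNz⟩, rfl⟩, rfl⟩)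
        · exact hx
        · have : z - N + N = z := by omega
          rwa [this]
      · intro hx
        by_cases hlt : x < N
        · exact Or.inl ⟨hx, hlt⟩
        · exact Or.inr ⟨x - N, ⟨x, ⟨hx, by omega⟩, rfl⟩, by omega⟩
    · -- right inverse
      intro p hp
      rw [hD, Finset.mem_filter, Finset.mem_product] at hp
      obtain ⟨⟨hp1, hp2⟩, -, -⟩ := hp
      rw [Finset.mem_powerset] at hp1 hp2
      have himge : ∀ x ∈ p.2.image (· + N), N ≤ x := by
        intro x hx
        simp only [Finset.mem_image] at hx
        obtain ⟨y, _, rfl⟩ := hx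
        omega
      have h1 : (p.1 ∪ p.2.image (· + N)) ∩ Finset.range N = p.1 := by
        ext x
        simp only [Finset.mem_inter, Finset.mem_union, Finset.mem_range]
        constructor
        · rintro ⟨hx | hx, hxN⟩
          · exact hx
          · exact absurd hxN (by have := himge x hx; omega)
        · intro hx; exact ⟨Or.inl hx, by simpa using hp1 hx⟩
      have h2 : ((p.1 ∪ p.2.image (· + N)).filter (N ≤ ·)).image (· - N) = p.2 := by
        ext x
        simp only [Finset.mem_image, Finset.mem_filter, Finset.mem_union]
        constructor
        · rintro ⟨y, ⟨hy | hy, hNy⟩, rfl⟩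
          · exact absurd hNy (by have h := Finset.mem_range.mp (hp1 hy); omega)
          · obtain ⟨z, hz, rfl⟩ := hy
            have hzz : z + N - N = z := by omega
            rwa [hzz]
        · intro hx
          exact ⟨x + N, ⟨Or.inr ⟨x, hx, rfl⟩, by omega⟩, by omega⟩
      exact Prod.ext h1 h2
  rw [step1]
  -- now split by the size of the first component
  rw [Finset.card_eq_sum_card_fiberwise (f := fun p : Finset ℕ × Finset ℕ => p.1.card)
    (t := Finset.range (n + 1)) (by
      intro p hp
      rw [hD, Finset.mem_coe, Finset.mem_filter] at hp
      simp only [Finset.mem_coe, Finset.mem_range]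
      omega)]
  apply Finset.sum_congr rfl
  intro i hi
  simp only [Finset.mem_range] at hi
  congr 1
  ext p
  rw [hD]
  simp only [Finset.mem_filter, Finset.mem_product, Finset.mem_powerset,
    Finset.mem_powersetCard]
  constructor
  · rintro ⟨⟨⟨hs1, hs2⟩, hcard, hsh⟩, hfib⟩
    exact ⟨⟨⟨hs1, hfib⟩, hs2, by omega⟩, hsh⟩
  · rintro ⟨⟨⟨hs1, hc1⟩, hs2, hc2⟩, hsh⟩
    exact ⟨⟨⟨hs1, hs2⟩, by omega, hsh⟩, hc1⟩
/-! ### Evaluating the terms -/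

lemma rsh_some {k : ℕ} {B : Finset ℕ} (hB : B ⊆ Finset.range (2 ^ k)) (hne : B.Nonempty) :
    ∃ t' : RBT ℕ, rsh k B = some t'.shape ∧ t'.numLeaves = B.card := by
  obtain ⟨t', ht, hc⟩ := restrict_some (t := label (fullBal k)) (B := B)
    (by rw [leaves_label]; exact Multiset.nodup_range _)
    (by intro b hb
        rw [leaves_label, numLeaves_fullBal, Multiset.mem_range]
        exact Finset.mem_range.mp (hB hb)) hne
  exact ⟨t', by rw [rsh, ht]; rfl, hc⟩

lemma term_eval (k i j : ℕ) (s : UTree) (Q₁ Q₂ : Finset ℕ → Prop)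
    [DecidablePred Q₁] [DecidablePred Q₂]
    (h : ∀ p₁ p₂ : Finset ℕ, p₁ ⊆ Finset.range (2 ^ k) → p₁.card = i →
      p₂ ⊆ Finset.range (2 ^ k) → p₂.card = j →
      (mergeShape (rsh k p₁) (rsh k p₂) = some (RBT.canon s) ↔ Q₁ p₁ ∧ Q₂ p₂)) :
    (((Finset.range (2 ^ k)).powersetCard i ×ˢ (Finset.range (2 ^ k)).powersetCard j).filter
        (fun p => mergeShape (rsh k p.1) (rsh k p.2) = some (RBT.canon s))).card =
      (((Finset.range (2 ^ k)).powersetCard i).filter Q₁).card *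
        (((Finset.range (2 ^ k)).powersetCard j).filter Q₂).card := by
  have hcg : (((Finset.range (2 ^ k)).powersetCard i ×ˢ
      (Finset.range (2 ^ k)).powersetCard j).filter
        (fun p => mergeShape (rsh k p.1) (rsh k p.2) = some (RBT.canon s))) =
      (((Finset.range (2 ^ k)).powersetCard i ×ˢ (Finset.range (2 ^ k)).powersetCard j).filter
        (fun p => Q₁ p.1 ∧ Q₂ p.2)) := by
    apply Finset.filter_congr
    intro p hp
    rw [Finset.mem_product, Finset.mem_powersetCard, Finset.mem_powersetCard] at hp
    exact h p.1 p.2 hp.1.1 hp.1.2 hp.2.1 hp.2.2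
  rw [hcg, Finset.filter_product, Finset.card_product]

lemma filter_true_card (s : Finset (Finset ℕ)) :
    (s.filter (fun _ => True)).card = s.card := by simp

lemma filter_false_card (s : Finset (Finset ℕ)) :
    (s.filter (fun _ => False)).card = 0 := by simp

lemma rsh_empty (k : ℕ) : rsh k ∅ = none := by
  rw [rsh, restrict_empty]; rfl

lemma mergeShape_none_left (x : Option UTree) : mergeShape none x = x := by
  cases x <;> rfl

lemma mergeShape_none_right (x : Option UTree) : mergeShape x none = x := by
  cases x <;> rfl

/-- The filter counting `countRestr` directly. -/
lemma filter_rsh_card (k : ℕ) (s : UTree) (n : ℕ) :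
    (((Finset.range (2 ^ k)).powersetCard n).filter
      (fun A => rsh k A = some (RBT.canon s))).card = countRestr (fullBal k) s n :=
  (countRestr_eq k s n).symm
/-! ### The five recurrences -/

lemma h_zero_left (k n : ℕ) (s : UTree) :
    ∀ p₁ p₂ : Finset ℕ, p₁ ⊆ Finset.range (2 ^ k) → p₁.card = 0 →
      p₂ ⊆ Finset.range (2 ^ k) → p₂.card = n →
      (mergeShape (rsh k p₁) (rsh k p₂) = some (RBT.canon s) ↔
        (fun _ => True) p₁ ∧ (fun B => rsh k B = some (RBT.canon s)) p₂) := by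
  intro p₁ p₂ _ h₁c _ _
  rw [Finset.card_eq_zero.mp h₁c, rsh_empty, mergeShape_none_left]
  simp

lemma h_zero_right (k n : ℕ) (s : UTree) :
    ∀ p₁ p₂ : Finset ℕ, p₁ ⊆ Finset.range (2 ^ k) → p₁.card = n →
      p₂ ⊆ Finset.range (2 ^ k) → p₂.card = 0 →
      (mergeShape (rsh k p₁) (rsh k p₂) = some (RBT.canon s) ↔
        (fun B => rsh k B = some (RBT.canon s)) p₁ ∧ (fun _ => True) p₂) := by
  intro p₁ p₂ _ _ _ h₂c
  rw [Finset.card_eq_zero.mp h₂c, rsh_empty, mergeShape_none_right]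
  simp

lemma rec_b4 (k : ℕ) :
    countRestr (fullBal (k + 1)) bal4U 4 =
      2 * countRestr (fullBal k) bal4U 4 + Nat.choose (2 ^ k) 2 ^ 2 := by
  rw [count_succ]
  rw [Finset.sum_range_succ, Finset.sum_range_succ, Finset.sum_range_succ,
      Finset.sum_range_succ, Finset.sum_range_succ, Finset.sum_range_zero]
  simp only [show (4:ℕ)-0=4 from rfl, show (4:ℕ)-1=3 from rfl, show (4:ℕ)-2=2 from rfl,
    show (4:ℕ)-3=1 from rfl, show (4:ℕ)-4=0 from rfl, Nat.zero_add]
  have e0 := term_eval k 0 4 bal4U (fun _ => True)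
    (fun B => rsh k B = some (RBT.canon bal4U)) (h_zero_left k 4 bal4U)
  have e4 := term_eval k 4 0 bal4U (fun B => rsh k B = some (RBT.canon bal4U))
    (fun _ => True) (h_zero_right k 4 bal4U)
  have e1 := term_eval k 1 3 bal4U (fun _ => False) (fun _ => False) (by
    intro p₁ p₂ h₁s h₁c h₂s h₂c
    obtain ⟨t₁, ht₁, hc₁⟩ := rsh_some h₁s (Finset.card_pos.mp (by omega))
    obtain ⟨t₂, ht₂, hc₂⟩ := rsh_some h₂s (Finset.card_pos.mp (by omega))
    rw [ht₁, ht₂, shape_card_one (by omega : t₁.numLeaves = 1),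
      shape_card_three (by omega : t₂.numLeaves = 3)]
    exact iff_of_false (by decide) (by simp))
  have e3 := term_eval k 3 1 bal4U (fun _ => False) (fun _ => False) (by
    intro p₁ p₂ h₁s h₁c h₂s h₂c
    obtain ⟨t₁, ht₁, hc₁⟩ := rsh_some h₁s (Finset.card_pos.mp (by omega))
    obtain ⟨t₂, ht₂, hc₂⟩ := rsh_some h₂s (Finset.card_pos.mp (by omega))
    rw [ht₁, ht₂, shape_card_three (by omega : t₁.numLeaves = 3),
      shape_card_one (by omega : t₂.numLeaves = 1)]
    exact iff_of_false (by decide) (by simp))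
  have e2 := term_eval k 2 2 bal4U (fun _ => True) (fun _ => True) (by
    intro p₁ p₂ h₁s h₁c h₂s h₂c
    obtain ⟨t₁, ht₁, hc₁⟩ := rsh_some h₁s (Finset.card_pos.mp (by omega))
    obtain ⟨t₂, ht₂, hc₂⟩ := rsh_some h₂s (Finset.card_pos.mp (by omega))
    rw [ht₁, ht₂, shape_card_two (by omega : t₁.numLeaves = 2),
      shape_card_two (by omega : t₂.numLeaves = 2)]
    exact iff_of_true (by decide) ⟨trivial, trivial⟩)
  rw [e0, e1, e2, e3, e4]
  simp only [filter_true_card, filter_false_card, filter_rsh_card,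
    Finset.card_powersetCard, Finset.card_range]
  simp only [Nat.choose_zero_right, mul_one, one_mul, Nat.mul_zero, Nat.zero_mul]
  ring
lemma rec_c4 (k : ℕ) :
    countRestr (fullBal (k + 1)) (combU 4) 4 =
      2 * countRestr (fullBal k) (combU 4) 4 + 2 * (2 ^ k * Nat.choose (2 ^ k) 3) := by
  rw [count_succ]
  rw [Finset.sum_range_succ, Finset.sum_range_succ, Finset.sum_range_succ,
      Finset.sum_range_succ, Finset.sum_range_succ, Finset.sum_range_zero]
  simp only [show (4:ℕ)-0=4 from rfl, show (4:ℕ)-1=3 from rfl, show (4:ℕ)-2=2 from rfl,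
    show (4:ℕ)-3=1 from rfl, show (4:ℕ)-4=0 from rfl, Nat.zero_add]
  have e0 := term_eval k 0 4 (combU 4) (fun _ => True)
    (fun B => rsh k B = some (RBT.canon (combU 4))) (h_zero_left k 4 (combU 4))
  have e4 := term_eval k 4 0 (combU 4) (fun B => rsh k B = some (RBT.canon (combU 4)))
    (fun _ => True) (h_zero_right k 4 (combU 4))
  have e1 := term_eval k 1 3 (combU 4) (fun _ => True) (fun _ => True) (by
    intro p₁ p₂ h₁s h₁c h₂s h₂c
    obtain ⟨t₁, ht₁, hc₁⟩ := rsh_some h₁s (Finset.card_pos.mp (by omega))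
    obtain ⟨t₂, ht₂, hc₂⟩ := rsh_some h₂s (Finset.card_pos.mp (by omega))
    simp only [ht₁, ht₂, shape_card_one (by omega : t₁.numLeaves = 1),
      shape_card_three (by omega : t₂.numLeaves = 3)]
    decide)
  have e3 := term_eval k 3 1 (combU 4) (fun _ => True) (fun _ => True) (by
    intro p₁ p₂ h₁s h₁c h₂s h₂c
    obtain ⟨t₁, ht₁, hc₁⟩ := rsh_some h₁s (Finset.card_pos.mp (by omega))
    obtain ⟨t₂, ht₂, hc₂⟩ := rsh_some h₂s (Finset.card_pos.mp (by omega))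
    simp only [ht₁, ht₂, shape_card_three (by omega : t₁.numLeaves = 3),
      shape_card_one (by omega : t₂.numLeaves = 1)]
    decide)
  have e2 := term_eval k 2 2 (combU 4) (fun _ => False) (fun _ => False) (by
    intro p₁ p₂ h₁s h₁c h₂s h₂c
    obtain ⟨t₁, ht₁, hc₁⟩ := rsh_some h₁s (Finset.card_pos.mp (by omega))
    obtain ⟨t₂, ht₂, hc₂⟩ := rsh_some h₂s (Finset.card_pos.mp (by omega))
    simp only [ht₁, ht₂, shape_card_two (by omega : t₁.numLeaves = 2),
      shape_card_two (by omega : t₂.numLeaves = 2)]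
    decide)
  rw [e0, e1, e2, e3, e4]
  simp only [filter_true_card, filter_false_card, filter_rsh_card,
    Finset.card_powersetCard, Finset.card_range, Nat.choose_zero_right,
    Nat.choose_one_right, mul_one, one_mul, Nat.mul_zero, Nat.zero_mul]
  ring

lemma rec_b5 (k : ℕ) :
    countRestr (fullBal (k + 1)) bal5U 5 =
      2 * countRestr (fullBal k) bal5U 5 +
        2 * (Nat.choose (2 ^ k) 2 * Nat.choose (2 ^ k) 3) := by
  rw [count_succ]
  rw [Finset.sum_range_succ, Finset.sum_range_succ, Finset.sum_range_succ,
      Finset.sum_range_succ, Finset.sum_range_succ, Finset.sum_range_succ, Finset.sum_range_zero]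
  simp only [show (5:ℕ)-0=5 from rfl, show (5:ℕ)-1=4 from rfl, show (5:ℕ)-2=3 from rfl,
    show (5:ℕ)-3=2 from rfl, show (5:ℕ)-4=1 from rfl, show (5:ℕ)-5=0 from rfl, Nat.zero_add]
  have e0 := term_eval k 0 5 bal5U (fun _ => True)
    (fun B => rsh k B = some (RBT.canon bal5U)) (h_zero_left k 5 bal5U)
  have e5 := term_eval k 5 0 bal5U (fun B => rsh k B = some (RBT.canon bal5U))
    (fun _ => True) (h_zero_right k 5 bal5U)
  have e1 := term_eval k 1 4 bal5U (fun _ => False) (fun _ => False) (by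
    intro p₁ p₂ h₁s h₁c h₂s h₂c
    obtain ⟨t₁, ht₁, hc₁⟩ := rsh_some h₁s (Finset.card_pos.mp (by omega))
    obtain ⟨t₂, ht₂, hc₂⟩ := rsh_some h₂s (Finset.card_pos.mp (by omega))
    rcases shape_card_four (by omega : t₂.numLeaves = 4) with h4 | h4 <;>
      simp only [ht₁, ht₂, shape_card_one (by omega : t₁.numLeaves = 1), h4] <;> decide)
  have e4 := term_eval k 4 1 bal5U (fun _ => False) (fun _ => False) (by
    intro p₁ p₂ h₁s h₁c h₂s h₂c
    obtain ⟨t₁, ht₁, hc₁⟩ := rsh_some h₁s (Finset.card_pos.mp (by omega))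
    obtain ⟨t₂, ht₂, hc₂⟩ := rsh_some h₂s (Finset.card_pos.mp (by omega))
    rcases shape_card_four (by omega : t₁.numLeaves = 4) with h4 | h4 <;>
      simp only [ht₁, ht₂, shape_card_one (by omega : t₂.numLeaves = 1), h4] <;> decide)
  have e2 := term_eval k 2 3 bal5U (fun _ => True) (fun _ => True) (by
    intro p₁ p₂ h₁s h₁c h₂s h₂c
    obtain ⟨t₁, ht₁, hc₁⟩ := rsh_some h₁s (Finset.card_pos.mp (by omega))
    obtain ⟨t₂, ht₂, hc₂⟩ := rsh_some h₂s (Finset.card_pos.mp (by omega))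
    simp only [ht₁, ht₂, shape_card_two (by omega : t₁.numLeaves = 2),
      shape_card_three (by omega : t₂.numLeaves = 3)]
    decide)
  have e3 := term_eval k 3 2 bal5U (fun _ => True) (fun _ => True) (by
    intro p₁ p₂ h₁s h₁c h₂s h₂c
    obtain ⟨t₁, ht₁, hc₁⟩ := rsh_some h₁s (Finset.card_pos.mp (by omega))
    obtain ⟨t₂, ht₂, hc₂⟩ := rsh_some h₂s (Finset.card_pos.mp (by omega))
    simp only [ht₁, ht₂, shape_card_three (by omega : t₁.numLeaves = 3),
      shape_card_two (by omega : t₂.numLeaves = 2)]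
    decide)
  rw [e0, e1, e2, e3, e4, e5]
  simp only [filter_true_card, filter_false_card, filter_rsh_card,
    Finset.card_powersetCard, Finset.card_range, Nat.choose_zero_right,
    Nat.choose_one_right, mul_one, one_mul, Nat.mul_zero, Nat.zero_mul]
  ring

lemma rec_g5 (k : ℕ) :
    countRestr (fullBal (k + 1)) gir5U 5 =
      2 * countRestr (fullBal k) gir5U 5 +
        2 * (2 ^ k * countRestr (fullBal k) bal4U 4) := by
  rw [count_succ]
  rw [Finset.sum_range_succ, Finset.sum_range_succ, Finset.sum_range_succ,
      Finset.sum_range_succ, Finset.sum_range_succ, Finset.sum_range_succ, Finset.sum_range_zero]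
  simp only [show (5:ℕ)-0=5 from rfl, show (5:ℕ)-1=4 from rfl, show (5:ℕ)-2=3 from rfl,
    show (5:ℕ)-3=2 from rfl, show (5:ℕ)-4=1 from rfl, show (5:ℕ)-5=0 from rfl, Nat.zero_add]
  have e0 := term_eval k 0 5 gir5U (fun _ => True)
    (fun B => rsh k B = some (RBT.canon gir5U)) (h_zero_left k 5 gir5U)
  have e5 := term_eval k 5 0 gir5U (fun B => rsh k B = some (RBT.canon gir5U))
    (fun _ => True) (h_zero_right k 5 gir5U)
  have e1 := term_eval k 1 4 gir5U (fun _ => True)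
    (fun B => rsh k B = some (RBT.canon bal4U)) (by
    intro p₁ p₂ h₁s h₁c h₂s h₂c
    obtain ⟨t₁, ht₁, hc₁⟩ := rsh_some h₁s (Finset.card_pos.mp (by omega))
    obtain ⟨t₂, ht₂, hc₂⟩ := rsh_some h₂s (Finset.card_pos.mp (by omega))
    rcases shape_card_four (by omega : t₂.numLeaves = 4) with h4 | h4 <;>
      simp only [ht₁, ht₂, shape_card_one (by omega : t₁.numLeaves = 1), h4] <;> decide)
  have e4 := term_eval k 4 1 gir5U (fun B => rsh k B = some (RBT.canon bal4U))
    (fun _ => True) (by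
    intro p₁ p₂ h₁s h₁c h₂s h₂c
    obtain ⟨t₁, ht₁, hc₁⟩ := rsh_some h₁s (Finset.card_pos.mp (by omega))
    obtain ⟨t₂, ht₂, hc₂⟩ := rsh_some h₂s (Finset.card_pos.mp (by omega))
    rcases shape_card_four (by omega : t₁.numLeaves = 4) with h4 | h4 <;>
      simp only [ht₁, ht₂, shape_card_one (by omega : t₂.numLeaves = 1), h4] <;> decide)
  have e2 := term_eval k 2 3 gir5U (fun _ => False) (fun _ => False) (by
    intro p₁ p₂ h₁s h₁c h₂s h₂c
    obtain ⟨t₁, ht₁, hc₁⟩ := rsh_some h₁s (Finset.card_pos.mp (by omega))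
    obtain ⟨t₂, ht₂, hc₂⟩ := rsh_some h₂s (Finset.card_pos.mp (by omega))
    simp only [ht₁, ht₂, shape_card_two (by omega : t₁.numLeaves = 2),
      shape_card_three (by omega : t₂.numLeaves = 3)]
    decide)
  have e3 := term_eval k 3 2 gir5U (fun _ => False) (fun _ => False) (by
    intro p₁ p₂ h₁s h₁c h₂s h₂c
    obtain ⟨t₁, ht₁, hc₁⟩ := rsh_some h₁s (Finset.card_pos.mp (by omega))
    obtain ⟨t₂, ht₂, hc₂⟩ := rsh_some h₂s (Finset.card_pos.mp (by omega))
    simp only [ht₁, ht₂, shape_card_three (by omega : t₁.numLeaves = 3),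
      shape_card_two (by omega : t₂.numLeaves = 2)]
    decide)
  rw [e0, e1, e2, e3, e4, e5]
  simp only [filter_true_card, filter_false_card, filter_rsh_card,
    Finset.card_powersetCard, Finset.card_range, Nat.choose_zero_right,
    Nat.choose_one_right, mul_one, one_mul, Nat.mul_zero, Nat.zero_mul]
  ring

lemma rec_c5 (k : ℕ) :
    countRestr (fullBal (k + 1)) (combU 5) 5 =
      2 * countRestr (fullBal k) (combU 5) 5 +
        2 * (2 ^ k * countRestr (fullBal k) (combU 4) 4) := by
  rw [count_succ]
  rw [Finset.sum_range_succ, Finset.sum_range_succ, Finset.sum_range_succ,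
      Finset.sum_range_succ, Finset.sum_range_succ, Finset.sum_range_succ, Finset.sum_range_zero]
  simp only [show (5:ℕ)-0=5 from rfl, show (5:ℕ)-1=4 from rfl, show (5:ℕ)-2=3 from rfl,
    show (5:ℕ)-3=2 from rfl, show (5:ℕ)-4=1 from rfl, show (5:ℕ)-5=0 from rfl, Nat.zero_add]
  have e0 := term_eval k 0 5 (combU 5) (fun _ => True)
    (fun B => rsh k B = some (RBT.canon (combU 5))) (h_zero_left k 5 (combU 5))
  have e5 := term_eval k 5 0 (combU 5) (fun B => rsh k B = some (RBT.canon (combU 5)))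
    (fun _ => True) (h_zero_right k 5 (combU 5))
  have e1 := term_eval k 1 4 (combU 5) (fun _ => True)
    (fun B => rsh k B = some (RBT.canon (combU 4))) (by
    intro p₁ p₂ h₁s h₁c h₂s h₂c
    obtain ⟨t₁, ht₁, hc₁⟩ := rsh_some h₁s (Finset.card_pos.mp (by omega))
    obtain ⟨t₂, ht₂, hc₂⟩ := rsh_some h₂s (Finset.card_pos.mp (by omega))
    rcases shape_card_four (by omega : t₂.numLeaves = 4) with h4 | h4 <;>
      simp only [ht₁, ht₂, shape_card_one (by omega : t₁.numLeaves = 1), h4] <;> decide)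
  have e4 := term_eval k 4 1 (combU 5) (fun B => rsh k B = some (RBT.canon (combU 4)))
    (fun _ => True) (by
    intro p₁ p₂ h₁s h₁c h₂s h₂c
    obtain ⟨t₁, ht₁, hc₁⟩ := rsh_some h₁s (Finset.card_pos.mp (by omega))
    obtain ⟨t₂, ht₂, hc₂⟩ := rsh_some h₂s (Finset.card_pos.mp (by omega))
    rcases shape_card_four (by omega : t₁.numLeaves = 4) with h4 | h4 <;>
      simp only [ht₁, ht₂, shape_card_one (by omega : t₂.numLeaves = 1), h4] <;> decide)
  have e2 := term_eval k 2 3 (combU 5) (fun _ => False) (fun _ => False) (by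
    intro p₁ p₂ h₁s h₁c h₂s h₂c
    obtain ⟨t₁, ht₁, hc₁⟩ := rsh_some h₁s (Finset.card_pos.mp (by omega))
    obtain ⟨t₂, ht₂, hc₂⟩ := rsh_some h₂s (Finset.card_pos.mp (by omega))
    simp only [ht₁, ht₂, shape_card_two (by omega : t₁.numLeaves = 2),
      shape_card_three (by omega : t₂.numLeaves = 3)]
    decide)
  have e3 := term_eval k 3 2 (combU 5) (fun _ => False) (fun _ => False) (by
    intro p₁ p₂ h₁s h₁c h₂s h₂c
    obtain ⟨t₁, ht₁, hc₁⟩ := rsh_some h₁s (Finset.card_pos.mp (by omega))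
    obtain ⟨t₂, ht₂, hc₂⟩ := rsh_some h₂s (Finset.card_pos.mp (by omega))
    simp only [ht₁, ht₂, shape_card_three (by omega : t₁.numLeaves = 3),
      shape_card_two (by omega : t₂.numLeaves = 2)]
    decide)
  rw [e0, e1, e2, e3, e4, e5]
  simp only [filter_true_card, filter_false_card, filter_rsh_card,
    Finset.card_powersetCard, Finset.card_range, Nat.choose_zero_right,
    Nat.choose_one_right, mul_one, one_mul, Nat.mul_zero, Nat.zero_mul]
  ring
/-! ### Closed forms -/

lemma count_base (s : UTree) (n : ℕ) (hn : 2 ≤ n) : countRestr (fullBal 0) s n = 0 := by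
  rw [countRestr_eq]
  have h1 : ((Finset.range (2 ^ 0)).powersetCard n).card = 0 := by
    rw [Finset.card_powersetCard, Finset.card_range]
    exact Nat.choose_eq_zero_of_lt (by omega)
  have := Finset.card_filter_le ((Finset.range (2 ^ 0)).powersetCard n)
    (fun A => rsh 0 A = some (RBT.canon s))
  omega

lemma chooseZ2 (n : ℕ) : 2 * ((n.choose 2 : ℤ)) = n * (n - 1) := by
  induction n with
  | zero => simp
  | succ m ih =>
    rw [Nat.choose_succ_succ]
    push_cast [Nat.choose_one_right]
    linear_combination ih

lemma chooseZ3 (n : ℕ) : 6 * ((n.choose 3 : ℤ)) = n * (n - 1) * (n - 2) := by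
  induction n with
  | zero => simp
  | succ m ih =>
    rw [Nat.choose_succ_succ]
    push_cast
    linear_combination ih + 3 * chooseZ2 m

lemma chooseZ4 (n : ℕ) : 24 * ((n.choose 4 : ℤ)) = n * (n - 1) * (n - 2) * (n - 3) := by
  induction n with
  | zero => simp
  | succ m ih =>
    rw [Nat.choose_succ_succ]
    push_cast
    linear_combination ih + 4 * chooseZ3 m

lemma chooseZ5 (n : ℕ) :
    120 * ((n.choose 5 : ℤ)) = n * (n - 1) * (n - 2) * (n - 3) * (n - 4) := by
  induction n with
  | zero => simp
  | succ m ih =>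
    rw [Nat.choose_succ_succ]
    push_cast
    linear_combination ih + 5 * chooseZ4 m

lemma closed_b4 (k : ℕ) :
    168 * (countRestr (fullBal k) bal4U 4 : ℤ) =
      2 ^ k * (2 ^ k - 1) * (2 ^ k - 2) * (3 * 2 ^ k - 5) := by
  induction k with
  | zero => rw [count_base _ _ (by norm_num)]; norm_num
  | succ m ih =>
    rw [rec_b4]
    push_cast
    have h2 := chooseZ2 (2 ^ m); push_cast at h2
    linear_combination 2 * ih +
      42 * (2 * ((2 ^ m : ℕ).choose 2 : ℤ) + (2:ℤ) ^ m * ((2:ℤ) ^ m - 1)) * h2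

lemma closed_c4 (k : ℕ) :
    42 * (countRestr (fullBal k) (combU 4) 4 : ℤ) =
      2 ^ k * (2 ^ k - 1) * (2 ^ k - 2) * (2 ^ k - 4) := by
  induction k with
  | zero => rw [count_base _ _ (by norm_num)]; norm_num
  | succ m ih =>
    rw [rec_c4]
    push_cast
    have h3 := chooseZ3 (2 ^ m); push_cast at h3
    linear_combination 2 * ih + 14 * (2:ℤ) ^ m * h3

lemma closed_b5 (k : ℕ) :
    1260 * (countRestr (fullBal k) bal5U 5 : ℤ) =
      2 ^ k * (2 ^ k - 1) * (2 ^ k - 2) * (2 ^ k - 4) * (7 * 2 ^ k - 11) := by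
  induction k with
  | zero => rw [count_base _ _ (by norm_num)]; norm_num
  | succ m ih =>
    rw [rec_b5]
    push_cast
    have h2 := chooseZ2 (2 ^ m); push_cast at h2
    have h3 := chooseZ3 (2 ^ m); push_cast at h3
    linear_combination 2 * ih + 210 * ((2:ℤ) ^ m * ((2:ℤ) ^ m - 1)) * h3 +
      1260 * ((2 ^ m : ℕ).choose 3 : ℤ) * h2

lemma closed_g5 (k : ℕ) :
    840 * (countRestr (fullBal k) gir5U 5 : ℤ) =
      2 ^ k * (2 ^ k - 1) * (2 ^ k - 2) * (2 ^ k - 3) * (2 ^ k - 4) := by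
  induction k with
  | zero => rw [count_base _ _ (by norm_num)]; norm_num
  | succ m ih =>
    rw [rec_g5]
    push_cast
    linear_combination 2 * ih + 10 * (2 ^ m : ℤ) * closed_b4 m

lemma closed_c5 (k : ℕ) :
    630 * (countRestr (fullBal k) (combU 5) 5 : ℤ) =
      2 ^ k * (2 ^ k - 1) * (2 ^ k - 4) * ((2 ^ k) ^ 2 - 10 * 2 ^ k + 16) := by
  induction k with
  | zero => rw [count_base _ _ (by norm_num)]; norm_num
  | succ m ih =>
    rw [rec_c5]
    push_cast
    linear_combination 2 * ih + 30 * (2 ^ m : ℤ) * closed_c4 m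
/-! ### Densities -/

lemma pow_ge8 {k : ℕ} (hk : 3 ≤ k) : (8 : ℝ) ≤ (2 : ℝ) ^ k := by
  calc (8 : ℝ) = 2 ^ 3 := by norm_num
    _ ≤ 2 ^ k := by exact pow_le_pow_right₀ (by norm_num) hk

lemma real_b5 (k : ℕ) : (1260 : ℝ) * (countRestr (fullBal k) bal5U 5 : ℝ) =
    (2:ℝ)^k * ((2:ℝ)^k - 1) * ((2:ℝ)^k - 2) * ((2:ℝ)^k - 4) * (7 * (2:ℝ)^k - 11) := by
  have := closed_b5 k
  exact_mod_cast this

lemma real_g5 (k : ℕ) : (840 : ℝ) * (countRestr (fullBal k) gir5U 5 : ℝ) =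
    (2:ℝ)^k * ((2:ℝ)^k - 1) * ((2:ℝ)^k - 2) * ((2:ℝ)^k - 3) * ((2:ℝ)^k - 4) := by
  have := closed_g5 k
  exact_mod_cast this

lemma real_c5 (k : ℕ) : (630 : ℝ) * (countRestr (fullBal k) (combU 5) 5 : ℝ) =
    (2:ℝ)^k * ((2:ℝ)^k - 1) * ((2:ℝ)^k - 4) * (((2:ℝ)^k) ^ 2 - 10 * (2:ℝ)^k + 16) := by
  have := closed_c5 k
  exact_mod_cast this

lemma real_C (k : ℕ) : (120 : ℝ) * (Nat.choose (2 ^ k) 5 : ℝ) =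
    (2:ℝ)^k * ((2:ℝ)^k - 1) * ((2:ℝ)^k - 2) * ((2:ℝ)^k - 3) * ((2:ℝ)^k - 4) := by
  have := chooseZ5 (2 ^ k)
  exact_mod_cast this

section dens

variable {k : ℕ}

lemma aux_pos (hk : 3 ≤ k) :
    (0:ℝ) < (2:ℝ)^k ∧ (0:ℝ) < (2:ℝ)^k - 1 ∧ (0:ℝ) < (2:ℝ)^k - 2 ∧ (0:ℝ) < (2:ℝ)^k - 3 ∧
      (0:ℝ) < (2:ℝ)^k - 4 := by
  have := pow_ge8 hk
  refine ⟨by linarith, by linarith, by linarith, by linarith, by linarith⟩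

lemma choose_ne (hk : 3 ≤ k) : (Nat.choose (2 ^ k) 5 : ℝ) ≠ 0 := by
  obtain ⟨h0, h1, h2, h3, h4⟩ := aux_pos hk
  have hC := real_C k
  intro h
  rw [h, mul_zero] at hC
  have := mul_pos (mul_pos (mul_pos (mul_pos h0 h1) h2) h3) h4
  linarith

lemma dens_b5 (hk : 3 ≤ k) :
    (countRestr (fullBal k) bal5U 5 : ℝ) / (Nat.choose (2 ^ k) 5 : ℝ) =
      2 / 3 + 20 / (21 * ((2 : ℝ) ^ k - 3)) := by
  obtain ⟨h0, h1, h2, h3, h4⟩ := aux_pos hk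
  have hC := real_C k
  have hb := real_b5 k
  rw [div_eq_iff (choose_ne hk)]
  have hCv : (Nat.choose (2 ^ k) 5 : ℝ) =
      (2:ℝ)^k * ((2:ℝ)^k - 1) * ((2:ℝ)^k - 2) * ((2:ℝ)^k - 3) * ((2:ℝ)^k - 4) / 120 := by
    rw [eq_div_iff (by norm_num)]; linarith
  have hbv : (countRestr (fullBal k) bal5U 5 : ℝ) =
      (2:ℝ)^k * ((2:ℝ)^k - 1) * ((2:ℝ)^k - 2) * ((2:ℝ)^k - 4) * (7 * (2:ℝ)^k - 11) / 1260 := by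
    rw [eq_div_iff (by norm_num)]; linarith
  rw [hCv, hbv]
  field_simp
  ring

lemma dens_g5 (hk : 3 ≤ k) :
    (countRestr (fullBal k) gir5U 5 : ℝ) / (Nat.choose (2 ^ k) 5 : ℝ) = 1 / 7 := by
  obtain ⟨h0, h1, h2, h3, h4⟩ := aux_pos hk
  have hC := real_C k
  have hg := real_g5 k
  rw [div_eq_iff (choose_ne hk)]
  have hCv : (Nat.choose (2 ^ k) 5 : ℝ) =
      (2:ℝ)^k * ((2:ℝ)^k - 1) * ((2:ℝ)^k - 2) * ((2:ℝ)^k - 3) * ((2:ℝ)^k - 4) / 120 := by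
    rw [eq_div_iff (by norm_num)]; linarith
  have hgv : (countRestr (fullBal k) gir5U 5 : ℝ) =
      (2:ℝ)^k * ((2:ℝ)^k - 1) * ((2:ℝ)^k - 2) * ((2:ℝ)^k - 3) * ((2:ℝ)^k - 4) / 840 := by
    rw [eq_div_iff (by norm_num)]; linarith
  rw [hCv, hgv]
  ring

lemma dens_c5 (hk : 3 ≤ k) :
    (countRestr (fullBal k) (combU 5) 5 : ℝ) / (Nat.choose (2 ^ k) 5 : ℝ) =
      4 / 21 - 20 / (21 * ((2 : ℝ) ^ k - 3)) := by
  obtain ⟨h0, h1, h2, h3, h4⟩ := aux_pos hk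
  have hC := real_C k
  have hc := real_c5 k
  rw [div_eq_iff (choose_ne hk)]
  have hCv : (Nat.choose (2 ^ k) 5 : ℝ) =
      (2:ℝ)^k * ((2:ℝ)^k - 1) * ((2:ℝ)^k - 2) * ((2:ℝ)^k - 3) * ((2:ℝ)^k - 4) / 120 := by
    rw [eq_div_iff (by norm_num)]; linarith
  have hcv : (countRestr (fullBal k) (combU 5) 5 : ℝ) =
      (2:ℝ)^k * ((2:ℝ)^k - 1) * ((2:ℝ)^k - 4) * (((2:ℝ)^k) ^ 2 - 10 * (2:ℝ)^k + 16) / 630 := by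
    rw [eq_div_iff (by norm_num)]; linarith
  rw [hCv, hcv]
  field_simp
  ring

end dens
/-- For `k ≥ 3`, let `b₅(k)` and `g₅(k)` count the `5`-element
leaf subsets of the complete balanced binary tree with `2^k` leaves whose
restriction trees have shapes `Bal_5` and `Gir_5` respectively.  Then
`b₅(k) = (1/315)·2^{k−2}·(2^k−4)(2^k−2)(2^k−1)(7·2^k−11)` and
`g₅(k) = (1/105)·2^{k−3}·(2^k−4)(2^k−3)(2^k−2)(2^k−1)`; the induced subtree
densities satisfy `b₅(k)/C(2^k,5) = 2/3 + 20/(21(2^k−3))` and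
`g₅(k)/C(2^k,5) = 1/7`, and as `k → ∞` the density vector for
`(Comb_5, Gir_5, Bal_5)` converges to `(4/21, 1/7, 2/3)`. -/
theorem fullBal_five_leaf_densities (k : ℕ) (hk : 3 ≤ k) :
    ((countRestr (fullBal k) bal5U 5 : ℝ) =
        (1 / 315) * (2 : ℝ) ^ (k - 2) * ((2 : ℝ) ^ k - 4) * ((2 : ℝ) ^ k - 2) *
          ((2 : ℝ) ^ k - 1) * (7 * (2 : ℝ) ^ k - 11)) ∧
    ((countRestr (fullBal k) gir5U 5 : ℝ) =
        (1 / 105) * (2 : ℝ) ^ (k - 3) * ((2 : ℝ) ^ k - 4) * ((2 : ℝ) ^ k - 3) *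
          ((2 : ℝ) ^ k - 2) * ((2 : ℝ) ^ k - 1)) ∧
    ((countRestr (fullBal k) bal5U 5 : ℝ) / (Nat.choose (2 ^ k) 5 : ℝ) =
        2 / 3 + 20 / (21 * ((2 : ℝ) ^ k - 3))) ∧
    ((countRestr (fullBal k) gir5U 5 : ℝ) / (Nat.choose (2 ^ k) 5 : ℝ) = 1 / 7) ∧
    Filter.Tendsto
      (fun j : ℕ =>
        ((countRestr (fullBal j) (combU 5) 5 : ℝ) / (Nat.choose (2 ^ j) 5 : ℝ),
         (countRestr (fullBal j) gir5U 5 : ℝ) / (Nat.choose (2 ^ j) 5 : ℝ),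
         (countRestr (fullBal j) bal5U 5 : ℝ) / (Nat.choose (2 ^ j) 5 : ℝ)))
      Filter.atTop (nhds (4 / 21, 1 / 7, 2 / 3)) := by
  refine ⟨?_, ?_, dens_b5 hk, dens_g5 hk, ?_⟩
  · -- closed form for b₅
    have hb := real_b5 k
    have hpow : (2 : ℝ) ^ k = 4 * 2 ^ (k - 2) := by
      have h : k - 2 + 2 = k := by omega
      nth_rewrite 1 [← h]
      rw [pow_add]
      ring
    rw [hpow] at hb ⊢
    linear_combination (1 / 1260 : ℝ) * hb
  · -- closed form for g₅
    have hg := real_g5 k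
    have hpow : (2 : ℝ) ^ k = 8 * 2 ^ (k - 3) := by
      have h : k - 3 + 3 = k := by omega
      nth_rewrite 1 [← h]
      rw [pow_add]
      ring
    rw [hpow] at hg ⊢
    linear_combination (1 / 840 : ℝ) * hg
  · -- the limit
    have h1 : Filter.Tendsto (fun j : ℕ => (2 : ℝ) ^ j) Filter.atTop Filter.atTop :=
      tendsto_pow_atTop_atTop_of_one_lt (by norm_num)
    have h2 : Filter.Tendsto (fun j : ℕ => (2 : ℝ) ^ j - 3) Filter.atTop Filter.atTop := by
      simpa [sub_eq_add_neg] using Filter.tendsto_atTop_add_const_right Filter.atTop (-3 : ℝ) h1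
    have h3 : Filter.Tendsto (fun j : ℕ => ((2 : ℝ) ^ j - 3)⁻¹) Filter.atTop (nhds 0) := by
      exact h2.inv_tendsto_atTop
    have h4 : Filter.Tendsto (fun j : ℕ => 20 / (21 * ((2 : ℝ) ^ j - 3)))
        Filter.atTop (nhds 0) := by
      have he : (fun j : ℕ => 20 / (21 * ((2 : ℝ) ^ j - 3)))
          = fun j : ℕ => (20 / 21) * ((2 : ℝ) ^ j - 3)⁻¹ := by
        funext j
        rw [div_eq_mul_inv, mul_inv]
        ring
      rw [he]
      simpa using h3.const_mul (20 / 21 : ℝ)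
    have compa : Filter.Tendsto (fun j : ℕ => 4 / 21 - 20 / (21 * ((2 : ℝ) ^ j - 3)))
        Filter.atTop (nhds (4 / 21)) := by
      simpa using Filter.Tendsto.sub (tendsto_const_nhds (x := (4 / 21 : ℝ))) h4
    have compc : Filter.Tendsto (fun j : ℕ => 2 / 3 + 20 / (21 * ((2 : ℝ) ^ j - 3)))
        Filter.atTop (nhds (2 / 3)) := by
      simpa using Filter.Tendsto.add (tendsto_const_nhds (x := (2 / 3 : ℝ))) h4
    have compb : Filter.Tendsto (fun _ : ℕ => (1 / 7 : ℝ)) Filter.atTop (nhds (1 / 7)) :=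
      tendsto_const_nhds
    have full := compa.prodMk_nhds (compb.prodMk_nhds compc)
    refine Filter.Tendsto.congr' ?_ full
    rw [Filter.EventuallyEq, Filter.eventually_atTop]
    refine ⟨3, fun j hj => ?_⟩
    rw [dens_c5 hj, dens_g5 hj, dens_b5 hj]
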